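/- Fix k ≥ 0. The double theta polynomial _kϑ_r^{(l)}(x,z|t) is invariant under the right action of s_i^z for all i ≥ 0 with i ≠ k; in particular, _kϑ_r^{(l)}(x,z|t) lies in the invariant subring R_∞^{(k)} of R_∞ under the right action of the parabolic subgroup W_(k) generated by {s_i : i ≥ 0, i ≠ k}. -/

import Mathlib

/-!
Statement 6: Fix `k ≥ 0`.  The double theta polynomial `_kϑ_r^{(l)}(x,z|t)` is invariant under
the right action of `s_i^z` for all `i ≥ 0` with `i ≠ k`; in particular it lies in the
invariant subring `R_∞^{(k)}` of `R_∞` under the right action of the parabolic subgroup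
`W_(k)` generated by `{s_i : i ≥ 0, i ≠ k}`.

The right action: `s_i^z` for `i ≥ 1` swaps `z_i` and `z_{i+1}` and fixes `Q_r(x)`; `s_0^z`
sends `z_1 ↦ −z_1` and `Q_r(x_1,x_2,…) ↦ Q_r(z_1,x_1,x_2,…)` (i.e. it prepends `z_1` to the
`x`-variables and negates `z_1`).  We realize the theta polynomials by their generating
functions, universally over every commutative ring, every number `N` of (possibly nonzero)
`x`-variables and all values of the variables (0-indexed: `x i, z i, t i` stand for
`x_{i+1}, z_{i+1}, t_{i+1}`).  Invariance under every generator `s_i^z`, `i ≠ k`, of `W_(k)`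
is exactly membership in the invariant subring. -/

open Finset

noncomputable section

variable {R : Type*} [CommRing R]

/-- The power series `(1 - a u)⁻¹ = ∑_n aⁿ uⁿ`. -/
def geomSeries (a : R) : PowerSeries R := PowerSeries.mk fun n => a ^ n

/-- The generating function `f_l(u)` of the double theta polynomials `_kϑ_r^{(l)}`. -/
def thetaGF (k N : ℕ) (x z t : ℕ → R) (l : ℤ) : PowerSeries R :=
  (∏ i ∈ range N, ((1 + PowerSeries.C (x i) * PowerSeries.X) * geomSeries (x i))) *
    (∏ i ∈ range k, (1 + PowerSeries.C (z i) * PowerSeries.X)) *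
    (if 0 ≤ l then ∏ i ∈ range l.toNat, (1 - PowerSeries.C (t i) * PowerSeries.X)
     else ∏ i ∈ range (-l).toNat, geomSeries (-(t i)))

/-- The double theta polynomial `_kϑ_r^{(l)}(x,z|t)`; it vanishes for `r < 0`. -/
def theta (k N : ℕ) (x z t : ℕ → R) (l r : ℤ) : R :=
  if r < 0 then 0 else PowerSeries.coeff r.toNat (thetaGF k N x z t l)

/-- The image `s_i^z(ϑ_r^{(l)})` of a double theta polynomial under the right Weyl group
action: for `i ≥ 1` the variables `z_i` and `z_{i+1}` (0-indexed: `z (i-1)` and `z i`) are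
swapped; for `i = 0`, `z_1 ↦ -z_1` and `Q_r(x) ↦ Q_r(z_1, x)`, i.e. `z_1` is prepended to the
`x`-variables. -/
def thetaSZ (i k N : ℕ) (x z t : ℕ → R) (l r : ℤ) : R :=
  if i = 0 then
    theta k (N + 1) (fun j => if j = 0 then z 0 else x (j - 1))
      (Function.update z 0 (-(z 0))) t l r
  else
    theta k N x (z ∘ Equiv.swap (i - 1) i) t l r

/-- Key identity: the geometric series is the inverse of `1 - a u`. -/
lemma geom_mul_one_sub (a : R) :
    geomSeries a * (1 - PowerSeries.C a * PowerSeries.X) = 1 := by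
  ext n
  cases n with
  | zero => simp [geomSeries]
  | succ n =>
    have : geomSeries a * (1 - PowerSeries.C a * PowerSeries.X)
        = geomSeries a - (geomSeries a * PowerSeries.C a) * PowerSeries.X := by ring
    rw [this, map_sub, PowerSeries.coeff_succ_mul_X, PowerSeries.coeff_mul_C]
    simp [geomSeries, pow_succ]

/-- Proposition 5.1 of Ikeda–Matsumura: `_kϑ_r^{(l)} ∈ R_∞^{(k)}`, i.e. the double theta
polynomial is invariant under `s_i^z` for every `i ≠ k`. -/
theorem theta_sz_invariant (k N : ℕ) (x z t : ℕ → R) (l r : ℤ) :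
    ∀ i : ℕ, i ≠ k → thetaSZ i k N x z t l r = theta k N x z t l r := by
  intro i hi
  rcases Nat.eq_zero_or_pos i with h0 | hpos
  · -- i = 0, so k ≥ 1
    subst h0
    obtain ⟨m, rfl⟩ := Nat.exists_eq_succ_of_ne_zero (Ne.symm hi)
    simp only [thetaSZ, if_pos rfl, theta, if_true, eq_self_iff_true]
    have hGF : thetaGF (m + 1) (N + 1) (fun j => if j = 0 then z 0 else x (j - 1))
        (Function.update z 0 (-(z 0))) t l = thetaGF (m + 1) N x z t l := by
      unfold thetaGF
      rw [Finset.prod_range_succ' (f := fun j =>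
        ((1 + PowerSeries.C ((if j = 0 then z 0 else x (j - 1))) * PowerSeries.X) *
          geomSeries ((if j = 0 then z 0 else x (j - 1))))),
        Finset.prod_range_succ' (f := fun j =>
          (1 + PowerSeries.C (Function.update z 0 (-(z 0)) j) * PowerSeries.X)),
        Finset.prod_range_succ' (n := m) (f := fun j =>
          (1 + PowerSeries.C (z j) * PowerSeries.X))]
      simp only [Nat.succ_ne_zero, if_false, if_pos rfl, Nat.add_sub_cancel,
        Function.update_of_ne (Nat.succ_ne_zero _), Function.update_self, map_neg,
        if_true, eq_self_iff_true]
      have h := geom_mul_one_sub (z 0)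
      set P := ∏ j ∈ range N, ((1 + PowerSeries.C (x j) * PowerSeries.X) * geomSeries (x j))
      set Q := ∏ j ∈ range m, (1 + PowerSeries.C (z (j + 1)) * PowerSeries.X)
      set T := (if 0 ≤ l then ∏ i ∈ range l.toNat, (1 - PowerSeries.C (t i) * PowerSeries.X)
        else ∏ i ∈ range (-l).toNat, geomSeries (-(t i)))
      set c := PowerSeries.C (z 0)
      set g := geomSeries (z 0)
      have h' : g * (1 - c * PowerSeries.X) = 1 := h
      linear_combination ((1 + c * PowerSeries.X) * P * Q * T) * h'
    rw [hGF]
  · -- i ≥ 1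
    simp only [thetaSZ, if_neg (Nat.pos_iff_ne_zero.mp hpos), theta]
    have hGF : thetaGF k N x (z ∘ Equiv.swap (i - 1) i) t l = thetaGF k N x z t l := by
      unfold thetaGF
      congr 2
      rcases lt_or_gt_of_ne hi with hik | hik
      · exact Equiv.Perm.prod_comp (Equiv.swap (i - 1) i) (range k)
          (fun j => (1 + PowerSeries.C (z j) * PowerSeries.X))
          (by
            intro a ha
            simp only [Set.mem_setOf_eq] at ha
            rcases Equiv.swap_apply_ne_self_iff.mp ha with ⟨-, h | h⟩ <;> subst h <;>
              simp [Finset.mem_coe, Finset.mem_range] <;> omega)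
      · apply Finset.prod_congr rfl
        intro j hj
        rw [Finset.mem_range] at hj
        have h1 : j ≠ i - 1 := by omega
        have h2 : j ≠ i := by omega
        simp [Equiv.swap_apply_of_ne_of_ne h1 h2]
    rw [hGF]

end
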